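/- Suppose that for every positive integer n and every real ρ > 0 there exists z ∈ (n, n + ρ) such that U^k(z) is never a positive integer for any k ∈ ℕ and the U-trajectory of z tends to {1, 2}. Then the only T-cycle is the trivial cycle: every positive integer n with T^l(n) = n for some l ≥ 1 satisfies n ∈ {1, 2}. -/
import Mathlib


/-- The real 3x+1 function: `Ux = x/2` if `⌊x⌋` is even, `(3x+1)/2` if `⌊x⌋` is odd. -/
noncomputable def U (x : ℝ) : ℝ := if Even ⌊x⌋ then x / 2 else (3 * x + 1) / 2

/-- The 3n+1 function `T n = n/2` if `n` is even, `(3n+1)/2` if `n` is odd. -/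
def T (n : ℕ) : ℕ := if Even n then n / 2 else (3 * n + 1) / 2


lemma T_pos {n : ℕ} (h : 0 < n) : 0 < T n := by
  rw [T]; split_ifs with he
  · obtain ⟨t, rfl⟩ := he; omega
  · omega

lemma cast_T_even {n : ℕ} (h : Even n) : (T n : ℝ) = n / 2 := by
  obtain ⟨t, rfl⟩ := h
  have h1 : T (t + t) = t := by rw [T, if_pos ⟨t, rfl⟩]; omega
  rw [h1]; push_cast; ring

lemma cast_T_odd {n : ℕ} (h : ¬ Even n) : (T n : ℝ) = (3 * n + 1) / 2 := by
  obtain ⟨t, rfl⟩ : Odd n := Nat.odd_iff.mpr (Nat.not_even_iff.mp h)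
  have h1 : T (2 * t + 1) = 3 * t + 2 := by
    rw [T, if_neg (by simp [Nat.even_add_one, parity_simps])]; omega
  rw [h1]; push_cast; ring

lemma U_step (m : ℕ) (δ : ℝ) (h0 : 0 < δ) (h1 : δ < 1) :
    U ((m : ℝ) + δ) = (T m : ℝ) + (if Even m then (1:ℝ)/2 else 3/2) * δ := by
  have hfloor : ⌊(m : ℝ) + δ⌋ = (m : ℤ) := by
    rw [Int.floor_eq_iff]
    constructor <;> [push_cast; push_cast] <;> linarith
  rw [U, hfloor]
  by_cases he : Even m
  · rw [if_pos (by exact_mod_cast he), if_pos he, cast_T_even he]; ring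
  · rw [if_neg (by exact_mod_cast he), if_neg he, cast_T_odd he]; ring

/-- If every interval `(n, n+ρ)` (with `n ∈ ℕ≥1`, `ρ > 0`) contains a point `z` whose
`U`-trajectory never hits a positive integer and tends to `{1, 2}`, then the only
`T`-cycle is the trivial one. -/
theorem OU_from_density
    (h : ∀ n : ℕ, 0 < n → ∀ ρ : ℝ, 0 < ρ → ∃ z : ℝ, (n : ℝ) < z ∧ z < n + ρ ∧
      (∀ k : ℕ, ¬∃ m : ℕ, 0 < m ∧ U^[k] z = (m : ℝ)) ∧
      (∃ L₀ L₁ : ℝ,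
        Filter.Tendsto (fun k : ℕ => U^[2 * k] z) Filter.atTop (nhds L₀) ∧
        Filter.Tendsto (fun k : ℕ => U^[2 * k + 1] z) Filter.atTop (nhds L₁) ∧
        ({L₀, L₁} : Set ℝ) = {1, 2})) :
    ∀ n : ℕ, 0 < n → ∀ l : ℕ, 1 ≤ l → T^[l] n = n → n = 1 ∨ n = 2 := by
  intro n hn l hl hcyc
  -- the cycle values
  set a : ℕ → ℕ := fun k => T^[k] n with ha
  have ha0 : a 0 = n := rfl
  have hastep : ∀ k, a (k + 1) = T (a k) := fun k => Function.iterate_succ_apply' T k n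
  have ha_pos : ∀ k, 0 < a k := by
    intro k; induction k with
    | zero => exact hn
    | succ k ih => rw [hastep]; exact T_pos ih
  have ha_per : ∀ k, a (k + l) = a k := by
    intro k
    show T^[k + l] n = T^[k] n
    rw [Function.iterate_add_apply, hcyc]
  -- multipliers
  set c : ℕ → ℝ := fun k => if Even (a k) then (1:ℝ)/2 else 3/2 with hc
  have hc_pos : ∀ k, 0 < c k := by intro k; rw [hc]; dsimp only; split_ifs <;> norm_num
  have hc_le : ∀ k, c k ≤ 3/2 := by intro k; rw [hc]; dsimp only; split_ifs <;> norm_num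
  set P : ℕ → ℝ := fun k => ∏ i ∈ Finset.range k, c i with hP
  have hP_pos : ∀ k, 0 < P k := by
    intro k; exact Finset.prod_pos fun i _ => hc_pos i
  have hP_succ : ∀ k, P (k + 1) = P k * c k := fun k => Finset.prod_range_succ c k
  -- P k * a 0 ≤ a k
  have hstep : ∀ k, c k * (a k : ℝ) ≤ (a (k + 1) : ℝ) := by
    intro k
    rw [hastep, hc]; dsimp only
    split_ifs with he
    · rw [cast_T_even he]; ring_nf; rfl
    · rw [cast_T_odd he]
      have : (1:ℝ) ≤ (a k : ℝ) := by exact_mod_cast ha_pos k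
      nlinarith
  have hPa : ∀ k, P k * (n : ℝ) ≤ (a k : ℝ) := by
    intro k; induction k with
    | zero => simp [hP, ha0]
    | succ k ih =>
      rw [hP_succ]
      calc P k * c k * (n : ℝ) = c k * (P k * n) := by ring
        _ ≤ c k * (a k : ℝ) := by
            exact mul_le_mul_of_nonneg_left ih (le_of_lt (hc_pos k))
        _ ≤ (a (k + 1) : ℝ) := hstep k
  have hPl : P l ≤ 1 := by
    have h1 := hPa l
    have h2' : a l = n := hcyc
    have h2 : (a l : ℝ) = (n : ℝ) := by exact_mod_cast h2'
    have hn' : (0:ℝ) < n := by exact_mod_cast hn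
    nlinarith [h1, h2]
  -- periodicity of c and P
  have hc_per : ∀ k, c (k + l) = c k := by intro k; rw [hc]; dsimp only; rw [ha_per]
  have hP_add : ∀ k, P (l + k) = P l * P k := by
    intro k
    rw [hP]; dsimp only
    rw [Finset.prod_range_add]
    congr 1
    apply Finset.prod_congr rfl
    intro i _
    rw [Nat.add_comm l i, hc_per]
  -- uniform bound on P
  set B : ℝ := (3/2 : ℝ) ^ l with hB
  have hB_pos : 0 < B := by positivity
  have hPB : ∀ k, P k ≤ B := by
    intro k
    induction k using Nat.strong_induction_on with
    | _ k ih =>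
      by_cases hk : k ≤ l
      · calc P k ≤ ∏ _i ∈ Finset.range k, (3/2 : ℝ) :=
              Finset.prod_le_prod (fun i _ => le_of_lt (hc_pos i)) (fun i _ => hc_le i)
          _ = (3/2 : ℝ) ^ k := by rw [Finset.prod_const, Finset.card_range]
          _ ≤ B := pow_le_pow_right₀ (by norm_num) hk
      · push_neg at hk
        have hk' : k = l + (k - l) := by omega
        rw [hk', hP_add]
        have := ih (k - l) (by omega)
        nlinarith [hP_pos (k - l), this]
  -- apply the density hypothesis with ρ = B⁻¹
  obtain ⟨z, hz1, hz2, -, L₀, L₁, hL₀, -, hset⟩ := h n hn B⁻¹ (by positivity)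
  set δ : ℝ := z - n with hδ
  have hδ0 : 0 < δ := by rw [hδ]; linarith
  have hδρ : δ < B⁻¹ := by rw [hδ]; linarith
  have hδP : ∀ k, δ * P k < 1 := by
    intro k
    calc δ * P k ≤ δ * B := mul_le_mul_of_nonneg_left (hPB k) (le_of_lt hδ0)
      _ < B⁻¹ * B := by exact mul_lt_mul_of_pos_right hδρ hB_pos
      _ = 1 := inv_mul_cancel₀ (ne_of_gt hB_pos)
  -- shadowing
  have hshadow : ∀ k, U^[k] z = (a k : ℝ) + δ * P k := by
    intro k; induction k with
    | zero => simp [ha0, hP, hδ]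
    | succ k ih =>
      rw [Function.iterate_succ_apply', ih]
      have hpos : 0 < δ * P k := mul_pos hδ0 (hP_pos k)
      rw [U_step (a k) (δ * P k) hpos (hδP k), hastep, hP_succ]
      have : (if Even (a k) then (1:ℝ)/2 else 3/2) = c k := rfl
      rw [this]; ring
  -- a at multiples of l equals n
  have hml : ∀ j, a (2 * (j * l)) = n := by
    intro j
    have : ∀ m, a (m * l) = n := by
      intro m; induction m with
      | zero => simpa using ha0
      | succ m ih => rw [Nat.succ_mul, ha_per, ih]
    have h2 : 2 * (j * l) = (2 * j) * l := by ring
    rw [h2, this]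
  -- pass to the limit along the subsequence j ↦ j * l
  have hjl : Filter.Tendsto (fun j : ℕ => j * l) Filter.atTop Filter.atTop :=
    Filter.tendsto_atTop_mono (fun j => Nat.le_mul_of_pos_right j hl) Filter.tendsto_id
  have hsub : Filter.Tendsto (fun j : ℕ => U^[2 * (j * l)] z) Filter.atTop (nhds L₀) :=
    hL₀.comp hjl
  have hnL : (n : ℝ) ≤ L₀ := by
    apply ge_of_tendsto' hsub
    intro j
    rw [hshadow, hml j]
    nlinarith [mul_pos hδ0 (hP_pos (2 * (j * l)))]
  have hL2 : L₀ ≤ 2 := by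
    have : L₀ ∈ ({L₀, L₁} : Set ℝ) := by left; rfl
    rw [hset] at this
    rcases this with h1 | h2
    · rw [h1]; norm_num
    · rw [h2]
  have : (n : ℝ) ≤ 2 := le_trans hnL hL2
  have : n ≤ 2 := by exact_mod_cast this
  omega
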